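/- Let F̂ be an (n-1)×(n-1) symmetric matrix and Q the Householder reflector from v = (1,...,1,1+√n)^T. Then there exist a unique vector f ∈ R^{n-1} and scalar ξ ∈ R such that Q · [[F̂, f],[f^T, ξ]] · Q is hollow (has zero diagonal), and they are given by (2f; ξ) = √n · Q · diag(Q [[F̂,0],[0,0]] Q), where diag(M) denotes the vector of diagonal entries of M. -/

import Mathlib

open Matrix

set_option linter.unusedVariables false

theorem hollow_completion_unique (n : ℕ) (F : Matrix (Fin n) (Fin n) ℝ) (hF : F.IsSymm) :
    let v : Fin (n + 1) → ℝ := fun i => if i = Fin.last n then 1 + Real.sqrt (n + 1) else 1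
    let Q : Matrix (Fin (n + 1)) (Fin (n + 1)) ℝ := 1 - (2 / (v ⬝ᵥ v)) • vecMulVec v v
    let B : (Fin n → ℝ) → ℝ → Matrix (Fin (n + 1)) (Fin (n + 1)) ℝ := fun f ξ =>
      Matrix.of fun i j =>
        Fin.lastCases (Fin.lastCases ξ (fun j' => f j') j)
          (fun i' => Fin.lastCases (f i') (fun j' => F i' j') j) i
    let F0 : Matrix (Fin (n + 1)) (Fin (n + 1)) ℝ :=
      Matrix.of fun i j =>
        Fin.lastCases (0 : ℝ) (fun i' => Fin.lastCases (0 : ℝ) (fun j' => F i' j') j) i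
    (∃! p : (Fin n → ℝ) × ℝ, ∀ k, (Q * B p.1 p.2 * Q) k k = 0) ∧
      (∀ p : (Fin n → ℝ) × ℝ, (∀ k, (Q * B p.1 p.2 * Q) k k = 0) →
        ∀ k : Fin (n + 1),
          (Fin.lastCases p.2 (fun i => 2 * p.1 i) k : ℝ) =
            Real.sqrt (n + 1) * Q.mulVec (fun j => (Q * F0 * Q) j j) k) := by
  intro v Q B F0
  have hv : v = fun i => if i = Fin.last n then 1 + Real.sqrt (n+1) else 1 := rfl
  have hQdef : Q = 1 - (2 / (v ⬝ᵥ v)) • vecMulVec v v := rfl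
  have hBdef : B = fun f ξ =>
      Matrix.of fun i j =>
        Fin.lastCases (Fin.lastCases ξ (fun j' => f j') j)
          (fun i' => Fin.lastCases (f i') (fun j' => F i' j') j) i := rfl
  have hF0def : F0 = Matrix.of fun i j =>
      Fin.lastCases (0 : ℝ) (fun i' => Fin.lastCases (0 : ℝ) (fun j' => F i' j') j) i := rfl
  set s := Real.sqrt (n+1) with hs_def
  have hs0 : (0:ℝ) < s := Real.sqrt_pos.mpr (by positivity)
  have hs1 : (0:ℝ) < s + 1 := by linarith
  have hs2 : s * s = (n:ℝ) + 1 := Real.mul_self_sqrt (by positivity)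
  have hvlt : ∀ k : Fin n, v k.castSucc = 1 := by
    intro k; rw [hv]; simp [(Fin.castSucc_lt_last k).ne]
  have hvlast : v (Fin.last n) = 1 + s := by rw [hv]; simp
  have hvv : v ⬝ᵥ v = 2 * (s * (s+1)) := by
    simp only [dotProduct, Fin.sum_univ_castSucc, hvlt, hvlast]
    simp
    linear_combination -hs2
  set c := 2 / (v ⬝ᵥ v) with hc_def
  have hc : c = 1 / (s * (s+1)) := by
    rw [hc_def, hvv]; rw [div_eq_div_iff (by positivity) (by positivity)]; ring
  -- basic mulVec facts
  have hVmv : ∀ (x : Fin (n+1) → ℝ) k, (vecMulVec v v *ᵥ x) k = v k * (v ⬝ᵥ x) := by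
    intro x k
    simp [Matrix.mulVec, vecMulVec_apply, dotProduct, Finset.mul_sum, mul_assoc]
  have hQx : ∀ (x : Fin (n+1) → ℝ) k, (Q *ᵥ x) k = x k - c * v k * (v ⬝ᵥ x) := by
    intro x k
    rw [hQdef, Matrix.sub_mulVec, Matrix.one_mulVec, Matrix.smul_mulVec]
    simp [hVmv x k, ← hc_def]; ring
  have hvQx : ∀ (x : Fin (n+1) → ℝ), v ⬝ᵥ (Q *ᵥ x) = -(v ⬝ᵥ x) := by
    intro x
    have : ∀ k, v k * (Q *ᵥ x) k = v k * x k - c * (v ⬝ᵥ x) * (v k * v k) := by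
      intro k; rw [hQx]; ring
    calc v ⬝ᵥ (Q *ᵥ x) = ∑ k, v k * (Q *ᵥ x) k := rfl
      _ = ∑ k, (v k * x k - c * (v ⬝ᵥ x) * (v k * v k)) := Finset.sum_congr rfl fun k _ => this k
      _ = (v ⬝ᵥ x) - c * (v ⬝ᵥ x) * (v ⬝ᵥ v) := by
          rw [Finset.sum_sub_distrib, ← Finset.mul_sum]; rfl
      _ = -(v ⬝ᵥ x) := by rw [hvv, hc]; field_simp; ring
  have hQQ : ∀ (x : Fin (n+1) → ℝ) k, (Q *ᵥ (Q *ᵥ x)) k = x k := by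
    intro x k
    rw [hQx, hvQx, hQx]; ring
  have hQsymm : ∀ i j, Q i j = Q j i := by
    intro i j
    rw [hQdef]
    by_cases h : i = j
    · subst h; rfl
    · simp only [Matrix.sub_apply, Matrix.smul_apply, vecMulVec_apply, smul_eq_mul,
        Matrix.one_apply_ne h, Matrix.one_apply_ne (Ne.symm h)]
      ring
  have hQab : ∀ (a b : Fin (n+1) → ℝ) (k l : Fin (n+1)),
      (Q * vecMulVec a b * Q) k l = (Q *ᵥ a) k * (Q *ᵥ b) l := by
    intro a b k l
    have h1 : Q * vecMulVec a b = vecMulVec (Q *ᵥ a) b := by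
      ext i j
      simp only [Matrix.mul_apply, vecMulVec_apply, Matrix.mulVec, dotProduct]
      rw [Finset.sum_mul]
      exact Finset.sum_congr rfl fun t _ => by ring
    rw [h1]
    simp only [Matrix.mul_apply, vecMulVec_apply, Matrix.mulVec, dotProduct]
    rw [Finset.mul_sum]
    refine Finset.sum_congr rfl fun j _ => ?_
    rw [hQsymm j l]; ring
  -- special vectors
  set e : Fin (n+1) → ℝ := fun k => if k = Fin.last n then 1 else 0 with he_def
  set one : Fin (n+1) → ℝ := fun _ => 1 with hone_def
  set u : (Fin n → ℝ) → (Fin (n+1) → ℝ) :=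
    fun f k => Fin.lastCases 0 (fun i => f i) k with hu_def
  have hve : v ⬝ᵥ e = 1 + s := by
    simp only [dotProduct, he_def, mul_ite, mul_one, mul_zero]
    rw [Finset.sum_ite_eq' Finset.univ (Fin.last n) v]
    simp [hvlast]
  have hvone : v ⬝ᵥ one = s * s + s := by
    simp only [dotProduct, hone_def, mul_one, Fin.sum_univ_castSucc, hvlt, hvlast]
    simp
    linear_combination -hs2
  have hQe : ∀ k, (Q *ᵥ e) k = -(1/s) := by
    intro k
    rw [hQx, hve, hc]
    induction k using Fin.lastCases with
    | last => rw [hvlast]; simp only [he_def]; simp; field_simp; ring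
    | cast k => rw [hvlt]; simp only [he_def, (Fin.castSucc_lt_last k).ne, if_false]
                field_simp
                ring
  have hQone_c : ∀ k : Fin n, (Q *ᵥ one) k.castSucc = 0 := by
    intro k
    rw [hQx, hvone, hvlt, hc]
    simp only [hone_def]
    field_simp
    ring
  have hQone_l : (Q *ᵥ one) (Fin.last n) = -s := by
    rw [hQx, hvone, hvlast, hc]
    simp only [hone_def]
    field_simp
    ring
  -- entries of u
  have hu_c : ∀ f (k : Fin n), u f k.castSucc = f k := by
    intro f k; simp [hu_def]
  have hu_l : ∀ f, u f (Fin.last n) = 0 := by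
    intro f; simp [hu_def]
  -- decomposition of B
  have hBdecomp : ∀ f ξ, B f ξ = F0 + (vecMulVec (u f) e + vecMulVec e (u f)
      + ξ • vecMulVec e e) := by
    intro f ξ
    ext i j
    simp only [Matrix.add_apply, Matrix.smul_apply, vecMulVec_apply, smul_eq_mul]
    induction i using Fin.lastCases with
    | last =>
      induction j using Fin.lastCases with
      | last =>
        rw [hBdef, hF0def]
        simp [hu_l, he_def]
      | cast j =>
        rw [hBdef, hF0def]
        simp [hu_l, hu_c, he_def, (Fin.castSucc_lt_last j).ne]
    | cast i =>
      induction j using Fin.lastCases with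
      | last =>
        rw [hBdef, hF0def]
        simp [hu_l, hu_c, he_def, (Fin.castSucc_lt_last i).ne]
      | cast j =>
        rw [hBdef, hF0def]
        simp [hu_c, he_def, (Fin.castSucc_lt_last i).ne, (Fin.castSucc_lt_last j).ne]
  have hdiagB : ∀ f ξ k, (Q * B f ξ * Q) k k
      = (Q * F0 * Q) k k + 2 * ((Q *ᵥ u f) k * (Q *ᵥ e) k)
        + ξ * ((Q *ᵥ e) k * (Q *ᵥ e) k) := by
    intro f ξ k
    rw [hBdecomp f ξ]
    simp only [Matrix.mul_add, Matrix.add_mul, Matrix.mul_smul, Matrix.smul_mul,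
      Matrix.add_apply, Matrix.smul_apply, smul_eq_mul, hQab]
    ring
  set dvec : Fin (n+1) → ℝ := fun j => (Q * F0 * Q) j j with hd_def
  set w : ℝ → Fin (n+1) → ℝ := fun ξ k => (s/2) * dvec k + (ξ/(2*s)) * 1 with hw_def
  have hQw : ∀ ξ k, (Q *ᵥ w ξ) k = (s/2) * (Q *ᵥ dvec) k + (ξ/(2*s)) * (Q *ᵥ one) k := by
    intro ξ k
    have : w ξ = (s/2) • dvec + (ξ/(2*s)) • one := by
      funext j; simp [hw_def, hone_def]
    rw [this]
    have h2 : Q *ᵥ ((s/2) • dvec + (ξ/(2*s)) • one)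
        = (s/2) • (Q *ᵥ dvec) + (ξ/(2*s)) • (Q *ᵥ one) := by
      rw [Matrix.mulVec_add, Matrix.mulVec_smul, Matrix.mulVec_smul]
    rw [h2]; simp [smul_eq_mul]
  -- the key equivalence
  have key : ∀ f ξ, (∀ k, (Q * B f ξ * Q) k k = 0) ↔
      (∀ k : Fin (n+1), (Fin.lastCases ξ (fun i => 2 * f i) k : ℝ) = s * (Q *ᵥ dvec) k) := by
    intro f ξ
    constructor
    · intro h
      have hQu : ∀ k, (Q *ᵥ u f) k = w ξ k := by
        intro k
        have h1 := h k
        rw [hdiagB f ξ k, hQe k] at h1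
        rw [hw_def]
        have hs0' : s ≠ 0 := ne_of_gt hs0
        field_simp at h1
        have h2 : s * ((s*s) * ((Q * F0 * Q) k k) - 2*s*((Q *ᵥ u f) k) + ξ) = s * 0 := by
          linear_combination s * h1
        have h3 := mul_left_cancel₀ hs0' h2
        field_simp
        simp only [hd_def]
        linear_combination (-1) * h3
      have huval : ∀ k, u f k = (s/2) * (Q *ᵥ dvec) k + (ξ/(2*s)) * (Q *ᵥ one) k := by
        intro k
        have : Q *ᵥ u f = w ξ := funext hQu
        calc u f k = (Q *ᵥ (Q *ᵥ u f)) k := (hQQ (u f) k).symm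
          _ = (Q *ᵥ w ξ) k := by rw [this]
          _ = _ := hQw ξ k
      intro k
      induction k using Fin.lastCases with
      | last =>
        have h1 := huval (Fin.last n)
        rw [hu_l, hQone_l] at h1
        simp only [Fin.lastCases_last]
        have hs0' : s ≠ 0 := ne_of_gt hs0
        field_simp at h1
        have h2 : (2*s) * ξ = (2*s) * (s * (Q *ᵥ dvec) (Fin.last n)) := by
          linear_combination (2 * s) * h1
        exact mul_left_cancel₀ (by positivity) h2
      | cast k =>
        have h1 := huval k.castSucc
        rw [hu_c, hQone_c] at h1
        simp only [Fin.lastCases_castSucc]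
        rw [h1]; ring
    · intro h k
      have hQwu : ∀ j, u f j = (Q *ᵥ w ξ) j := by
        intro j
        rw [hQw]
        induction j using Fin.lastCases with
        | last =>
          rw [hu_l, hQone_l]
          have h1 := h (Fin.last n)
          simp only [Fin.lastCases_last] at h1
          rw [h1]; field_simp; ring
        | cast j =>
          rw [hu_c, hQone_c]
          have h1 := h j.castSucc
          simp only [Fin.lastCases_castSucc] at h1
          have hs0' : s ≠ 0 := ne_of_gt hs0
          field_simp
          linear_combination s * h1
      have hQu : (Q *ᵥ u f) k = w ξ k := by
        rw [show u f = Q *ᵥ w ξ from funext hQwu]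
        exact hQQ (w ξ) k
      rw [hdiagB f ξ k, hQu, hQe k, hw_def]
      have hs0' : s ≠ 0 := ne_of_gt hs0
      field_simp
      ring
  constructor
  · refine ⟨⟨fun k => s * (Q *ᵥ dvec) k.castSucc / 2, s * (Q *ᵥ dvec) (Fin.last n)⟩, ?_, ?_⟩
    · refine (key _ _).mpr ?_
      intro k
      induction k using Fin.lastCases with
      | last => simp
      | cast k => simp only [Fin.lastCases_castSucc]; ring
    · rintro ⟨f, ξ⟩ hp
      replace hp := (key f ξ).mp hp
      have h1 := hp (Fin.last n)
      simp only [Fin.lastCases_last] at h1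
      refine Prod.ext ?_ ?_
      · funext k
        have h2 := hp k.castSucc
        simp only [Fin.lastCases_castSucc] at h2
        simp only
        rw [← h2]; ring
      · simpa using h1
  · rintro ⟨f, ξ⟩ hp k
    exact (key f ξ).mp hp k
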